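/- For matrix pairs (A_1, B_1) and (A_2, B_2), rank [C_2, e^{A_2 h} C_1] = rank [C_2, C_1] for almost all h ∈ ℝ (all but a measure-zero set), where C_i = [B_i, A_iB_i, …, A_i^{n-1}B_i]. -/

import Mathlib

open MeasureTheory

/-- The controllability matrix `C = [B, AB, …, A^{n-1}B]` (columns indexed by `Fin n × Fin m`). -/
def ctrlMat {n m : ℕ} (A : Matrix (Fin n) (Fin n) ℝ) (B : Matrix (Fin n) (Fin m) ℝ) :
    Matrix (Fin n) (Fin n × Fin m) ℝ :=
  fun i p => (A ^ (p.1 : ℕ) * B) i p.2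

namespace EzzineAux

open NormedSpace Nat Matrix Filter

variable {n m : ℕ}

lemma col_pow_mul_mem (A : Matrix (Fin n) (Fin n) ℝ) (B : Matrix (Fin n) (Fin m) ℝ)
    (p : ℕ) (j : Fin m) :
    (A ^ p * B)ᵀ j ∈ Submodule.span ℝ (Set.range (ctrlMat A B)ᵀ) := by
  rcases Nat.eq_zero_or_pos n with hn | hn
  · have : (A ^ p * B)ᵀ j = 0 := by
      funext i; exact absurd i.isLt (by omega)
    rw [this]; exact Submodule.zero_mem _
  have hmon : A.charpoly.Monic := A.charpoly_monic
  have hdeg : (Polynomial.X ^ p %ₘ A.charpoly).natDegree < n := by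
    have hne : A.charpoly ≠ 1 := by
      intro hone
      have := A.charpoly_natDegree_eq_dim
      rw [hone, Polynomial.natDegree_one, Fintype.card_fin] at this
      omega
    have := Polynomial.natDegree_modByMonic_lt (Polynomial.X ^ p) hmon hne
    rwa [A.charpoly_natDegree_eq_dim, Fintype.card_fin] at this
  have hpow : A ^ p = ∑ i ∈ Finset.range n, (Polynomial.X ^ p %ₘ A.charpoly).coeff i • A ^ i := by
    rw [Matrix.pow_eq_aeval_mod_charpoly, Polynomial.aeval_eq_sum_range' hdeg]
  have hcol : (A ^ p * B)ᵀ j = ∑ i ∈ Finset.range n,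
      (Polynomial.X ^ p %ₘ A.charpoly).coeff i • (A ^ i * B)ᵀ j := by
    funext r
    rw [hpow]
    simp only [Matrix.transpose_apply, Finset.sum_apply, Matrix.sum_mul, Matrix.sum_apply,
      Matrix.smul_mul, Matrix.smul_apply, smul_eq_mul, Pi.smul_apply]
  rw [hcol]
  exact Submodule.sum_mem _ fun i hi => Submodule.smul_mem _ _
    (Submodule.subset_span ⟨(⟨i, Finset.mem_range.mp hi⟩, j), rfl⟩)

lemma col_mul_ctrl_mem (A : Matrix (Fin n) (Fin n) ℝ) (B : Matrix (Fin n) (Fin m) ℝ)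
    {M : Matrix (Fin n) (Fin n) ℝ}
    (hM : M ∈ Submodule.span ℝ (Set.range fun k : ℕ => A ^ k)) (c : Fin n × Fin m) :
    (M * ctrlMat A B)ᵀ c ∈ Submodule.span ℝ (Set.range (ctrlMat A B)ᵀ) := by
  induction hM using Submodule.span_induction with
  | mem x hx =>
    obtain ⟨k, rfl⟩ := hx
    have key : (A ^ k * ctrlMat A B)ᵀ c = (A ^ (k + (c.1 : ℕ)) * B)ᵀ c.2 := by
      funext r
      show (A ^ k * ctrlMat A B) r c = (A ^ (k + (c.1 : ℕ)) * B) r c.2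
      rw [pow_add, Matrix.mul_assoc]
      simp [Matrix.mul_apply, ctrlMat]
    rw [key]
    exact col_pow_mul_mem A B _ _
  | zero =>
    simp only [Matrix.zero_mul, Matrix.transpose_zero]
    exact Submodule.zero_mem _
  | add x y hx hy ihx ihy =>
    have : ((x + y) * ctrlMat A B)ᵀ c = (x * ctrlMat A B)ᵀ c + (y * ctrlMat A B)ᵀ c := by
      funext r; simp only [Matrix.transpose_apply, Matrix.add_mul, Matrix.add_apply,
        Pi.add_apply]
    rw [this]; exact Submodule.add_mem _ ihx ihy
  | smul a x hx ih =>
    have : ((a • x) * ctrlMat A B)ᵀ c = a • (x * ctrlMat A B)ᵀ c := by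
      funext r; simp only [Matrix.transpose_apply, Matrix.smul_mul, Matrix.smul_apply,
        Pi.smul_apply]
    rw [this]; exact Submodule.smul_mem _ _ ih

lemma exp_mem_span_pow (A : Matrix (Fin n) (Fin n) ℝ) :
    exp A ∈ Submodule.span ℝ (Set.range fun k : ℕ => A ^ k) := by
  set T := Submodule.span ℝ (Set.range fun k : ℕ => A ^ k) with hT
  have hTc : IsClosed (T : Set (Matrix (Fin n) (Fin n) ℝ)) := T.closed_of_finiteDimensional
  letI : SeminormedRing (Matrix (Fin n) (Fin n) ℝ) := Matrix.linftyOpSemiNormedRing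
  letI : NormedRing (Matrix (Fin n) (Fin n) ℝ) := Matrix.linftyOpNormedRing
  letI : NormedAlgebra ℝ (Matrix (Fin n) (Fin n) ℝ) := Matrix.linftyOpNormedAlgebra
  have hsum : HasSum (fun k : ℕ => (k !⁻¹ : ℝ) • A ^ k) (exp A) :=
    NormedSpace.exp_series_hasSum_exp' A
  exact hTc.mem_of_tendsto hsum.tendsto_sum_nat
    (Filter.Eventually.of_forall fun s => Submodule.sum_mem _ fun k _ =>
      Submodule.smul_mem _ _ (Submodule.subset_span ⟨k, rfl⟩))

lemma analyticOnNhd_exp_entry (A : Matrix (Fin n) (Fin n) ℝ) (i j : Fin n) :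
    AnalyticOnNhd ℝ (fun h : ℝ => exp (h • A) i j) Set.univ := by
  letI : SeminormedRing (Matrix (Fin n) (Fin n) ℝ) := Matrix.linftyOpSemiNormedRing
  letI : NormedRing (Matrix (Fin n) (Fin n) ℝ) := Matrix.linftyOpNormedRing
  letI : NormedAlgebra ℝ (Matrix (Fin n) (Fin n) ℝ) := Matrix.linftyOpNormedAlgebra
  intro x _
  have h1 : AnalyticAt ℝ (fun h : ℝ => h • A) x := analyticAt_id.smul analyticAt_const
  have h2 : AnalyticAt ℝ (fun h : ℝ => exp (h • A)) x :=
    AnalyticAt.comp (f := fun h : ℝ => h • A) (g := exp) (x := x)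
      (NormedSpace.exp_analytic (𝕂 := ℝ) (x • A)) h1
  exact AnalyticAt.comp (g := fun M => M i j) (f := fun h : ℝ => exp (h • A)) (x := x)
    ((LinearMap.toContinuousLinearMap (Matrix.entryLinearMap ℝ ℝ i j)).analyticAt _) h2

lemma exists_UV {a : ℕ} {ι : Type} [Fintype ι] [DecidableEq ι] (M : Matrix (Fin a) ι ℝ) :
    ∃ (U : Matrix (Fin M.rank) (Fin a) ℝ) (V : Matrix ι (Fin M.rank) ℝ),
      U * M * V = (1 : Matrix (Fin M.rank) (Fin M.rank) ℝ) := by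
  classical
  set L := M.mulVecLin with hL
  have hfr : Module.finrank ℝ (LinearMap.range L) = M.rank := rfl
  have hfr' : Module.finrank ℝ (LinearMap.range L) = Module.finrank ℝ (Fin M.rank → ℝ) := by
    rw [hfr, Module.finrank_fin_fun]
  let e : (LinearMap.range L) ≃ₗ[ℝ] (Fin M.rank → ℝ) := LinearEquiv.ofFinrankEq _ _ hfr'
  obtain ⟨p, hp⟩ := (LinearMap.range L).exists_isCompl
  let π := (LinearMap.range L).projectionOnto p hp
  let P : (Fin a → ℝ) →ₗ[ℝ] (Fin M.rank → ℝ) := e.toLinearMap ∘ₗ π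
  obtain ⟨σ, hσ⟩ := L.rangeRestrict.exists_rightInverse_of_surjective L.range_rangeRestrict
  let Q : (Fin M.rank → ℝ) →ₗ[ℝ] (ι → ℝ) := σ ∘ₗ e.symm.toLinearMap
  have key : (P ∘ₗ L) ∘ₗ Q = LinearMap.id := by
    refine LinearMap.ext fun x => ?_
    have h1 : L (σ (e.symm x)) = ((e.symm x : LinearMap.range L) : Fin a → ℝ) := by
      have := LinearMap.congr_fun hσ (e.symm x)
      simpa [LinearMap.rangeRestrict] using congrArg (Subtype.val) this
    show e (π (L (σ (e.symm x)))) = x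
    rw [h1, Submodule.projectionOnto_apply_left hp, LinearEquiv.apply_symm_apply]
  have h2 : Matrix.toLin' M = L := by
    refine LinearMap.ext fun v => ?_
    rw [hL, Matrix.toLin'_apply, Matrix.mulVecLin_apply]
  refine ⟨LinearMap.toMatrix' P, LinearMap.toMatrix' Q, ?_⟩
  apply Matrix.toLin'.injective
  rw [Matrix.toLin'_mul, Matrix.toLin'_mul, Matrix.toLin'_one, Matrix.toLin'_toMatrix',
    Matrix.toLin'_toMatrix', h2]
  exact key

lemma measure_zero_of_analytic {g : ℝ → ℝ} (hg : AnalyticOnNhd ℝ g Set.univ) (h0 : g 0 ≠ 0) :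
    MeasureTheory.volume {x : ℝ | g x = 0} = 0 := by
  rcases hg.eqOn_zero_or_eventually_ne_zero_of_preconnected isPreconnected_univ with h | h
  · exact absurd (h (Set.mem_univ 0)) h0
  · rw [Filter.eventually_iff, mem_codiscreteWithin] at h
    have hdisj : ∀ x : ℝ, Disjoint (nhdsWithin x {x}ᶜ) (Filter.principal {x : ℝ | g x = 0}) := by
      intro x
      have := h x (Set.mem_univ x)
      have e : Set.univ \ {x | g x ≠ 0} = {x : ℝ | g x = 0} := by ext y; simp
      rw [e] at this; exact this
    have hcd := isClosed_and_discrete_iff.mpr hdisj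
    haveI := hcd.2.to_subtype
    have hcnt : Countable {x : ℝ | g x = 0} :=
      TopologicalSpace.separableSpace_iff_countable.mp inferInstance
    exact (Set.countable_coe_iff.mp hcnt).measure_zero _

variable {m₁ m₂ : ℕ}

lemma rank_le_aux (A₁ : Matrix (Fin n) (Fin n) ℝ) (B₁ : Matrix (Fin n) (Fin m₁) ℝ)
    (A₂ : Matrix (Fin n) (Fin n) ℝ) (B₂ : Matrix (Fin n) (Fin m₂) ℝ) (h : ℝ) :
    (Matrix.fromCols (ctrlMat A₂ B₂) (exp (h • A₂) * ctrlMat A₁ B₁)).rank ≤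
      (Matrix.fromCols (ctrlMat A₂ B₂) (ctrlMat A₁ B₁)).rank := by
  classical
  set C₁ := ctrlMat A₁ B₁
  set C₂ := ctrlMat A₂ B₂
  set E := exp (h • A₂) with hE
  set E' := exp (-(h • A₂)) with hE'
  have hEE' : E * E' = 1 := by
    rw [hE, hE', ← Matrix.exp_add_of_commute _ _ ((Commute.refl (h • A₂)).neg_right),
      add_neg_cancel, NormedSpace.exp_zero]
  have hfc : fromCols C₂ (E * C₁) = E * fromCols (E' * C₂) C₁ := by
    rw [Matrix.mul_fromCols, ← Matrix.mul_assoc, hEE', Matrix.one_mul]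
  rw [hfc]
  refine le_trans (Matrix.rank_mul_le_right _ _) ?_
  rw [Matrix.rank_eq_finrank_span_cols, Matrix.rank_eq_finrank_span_cols]
  apply Submodule.finrank_mono
  rw [Submodule.span_le]
  rintro x ⟨c, rfl⟩
  have hsub : Submodule.span ℝ (Set.range C₂ᵀ) ≤
      Submodule.span ℝ (Set.range (fromCols C₂ C₁)ᵀ) := by
    apply Submodule.span_mono
    rintro y ⟨p, rfl⟩
    exact ⟨Sum.inl p, by funext r; simp [Matrix.fromCols_apply_inl]⟩
  cases c with
  | inl p =>
    have hcol : (fromCols (E' * C₂) C₁)ᵀ (Sum.inl p) = (E' * C₂)ᵀ p := by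
      funext r; simp [Matrix.fromCols_apply_inl]
    rw [show (fromCols (E' * C₂) C₁).col (Sum.inl p) = (E' * C₂)ᵀ p from hcol]
    refine hsub (col_mul_ctrl_mem A₂ B₂ ?_ p)
    have hmem := exp_mem_span_pow (-(h • A₂))
    have hle : Submodule.span ℝ (Set.range fun k : ℕ => (-(h • A₂)) ^ k) ≤
        Submodule.span ℝ (Set.range fun k : ℕ => A₂ ^ k) := by
      rw [Submodule.span_le]
      rintro y ⟨k, rfl⟩
      have : (-(h • A₂)) ^ k = (-h) ^ k • A₂ ^ k := by
        rw [← neg_smul, smul_pow]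
      show (-(h • A₂)) ^ k ∈ _
      rw [this]
      exact Submodule.smul_mem _ _ (Submodule.subset_span ⟨k, rfl⟩)
    exact hle hmem
  | inr q =>
    have hcol : (fromCols (E' * C₂) C₁)ᵀ (Sum.inr q) = (fromCols C₂ C₁)ᵀ (Sum.inr q) := by
      funext r; simp [Matrix.fromCols_apply_inr]
    rw [show (fromCols (E' * C₂) C₁).col (Sum.inr q) = (fromCols C₂ C₁).col (Sum.inr q) from hcol]
    exact Submodule.subset_span ⟨Sum.inr q, rfl⟩

end EzzineAux

open EzzineAux NormedSpace Matrix

/-- For almost all `h ∈ ℝ`, `rank [C₂, e^{A₂h}C₁] = rank [C₂, C₁]`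
(Ezzine–Haddad's conjecture for `N = 2`). -/
theorem rank_exp_concat_ae_eq {n m₁ m₂ : ℕ}
    (A₁ : Matrix (Fin n) (Fin n) ℝ) (B₁ : Matrix (Fin n) (Fin m₁) ℝ)
    (A₂ : Matrix (Fin n) (Fin n) ℝ) (B₂ : Matrix (Fin n) (Fin m₂) ℝ) :
    ∀ᵐ h : ℝ ∂volume,
      (Matrix.fromCols (ctrlMat A₂ B₂)
          (NormedSpace.exp (h • A₂) * ctrlMat A₁ B₁)).rank =
        (Matrix.fromCols (ctrlMat A₂ B₂) (ctrlMat A₁ B₁)).rank := by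
  classical
  set C₁ := ctrlMat A₁ B₁ with hC₁
  set C₂ := ctrlMat A₂ B₂ with hC₂
  set M₀ := fromCols C₂ C₁ with hM₀
  obtain ⟨U, V, hUV⟩ := exists_UV M₀
  set W : ℝ → Matrix (Fin M₀.rank) (Fin M₀.rank) ℝ :=
    fun h => U * fromCols C₂ (exp (h • A₂) * C₁) * V with hW
  have hsplit : ∀ h : ℝ, W h =
      U * fromCols C₂ (0 : Matrix (Fin n) (Fin n × Fin m₁) ℝ) * V +
        U * exp (h • A₂) * (fromCols (0 : Matrix (Fin n) (Fin n × Fin m₂) ℝ) C₁ * V) := by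
    intro h
    have h1 : fromCols C₂ (exp (h • A₂) * C₁) =
        fromCols C₂ (0 : Matrix (Fin n) (Fin n × Fin m₁) ℝ) +
          exp (h • A₂) * fromCols (0 : Matrix (Fin n) (Fin n × Fin m₂) ℝ) C₁ := by
      rw [Matrix.mul_fromCols, Matrix.mul_zero]
      funext i c
      cases c with
      | inl p => simp [Matrix.fromCols_apply_inl, Matrix.add_apply]
      | inr q => simp [Matrix.fromCols_apply_inr, Matrix.add_apply]
    show U * fromCols C₂ (exp (h • A₂) * C₁) * V = _
    rw [h1, Matrix.mul_add, Matrix.add_mul]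
    congr 1
    rw [← Matrix.mul_assoc U, Matrix.mul_assoc (U * exp (h • A₂))]
  have hWentry : ∀ i j : Fin M₀.rank, AnalyticOnNhd ℝ (fun h : ℝ => W h i j) Set.univ := by
    intro i j
    have hval : ∀ h : ℝ, W h i j =
        (U * fromCols C₂ (0 : Matrix (Fin n) (Fin n × Fin m₁) ℝ) * V) i j +
          ∑ a : Fin n, (∑ b : Fin n, U i b * exp (h • A₂) b a) *
            (fromCols (0 : Matrix (Fin n) (Fin n × Fin m₂) ℝ) C₁ * V) a j := by
      intro h
      rw [hsplit h]
      simp [Matrix.add_apply, Matrix.mul_apply]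
    simp only [hval]
    apply AnalyticOnNhd.add
    · exact analyticOnNhd_const
    · refine Finset.analyticOnNhd_fun_sum _ fun a _ => ?_
      refine AnalyticOnNhd.mul ?_ analyticOnNhd_const
      refine Finset.analyticOnNhd_fun_sum _ fun b _ => ?_
      exact analyticOnNhd_const.mul (analyticOnNhd_exp_entry A₂ b a)
  have hg : AnalyticOnNhd ℝ (fun h : ℝ => (W h).det) Set.univ := by
    simp only [Matrix.det_apply']
    refine Finset.analyticOnNhd_fun_sum _ fun σ _ => ?_
    exact analyticOnNhd_const.mul (Finset.analyticOnNhd_fun_prod _ fun i _ => hWentry (σ i) i)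
  have hW0 : W 0 = 1 := by
    rw [hW]
    simp only [zero_smul, NormedSpace.exp_zero, Matrix.one_mul]
    exact hUV
  have hdet0 : (W 0).det ≠ 0 := by
    rw [hW0, Matrix.det_one]; exact one_ne_zero
  have key : ∀ h : ℝ, (W h).det ≠ 0 →
      (fromCols C₂ (exp (h • A₂) * C₁)).rank = M₀.rank := by
    intro h hdet
    refine le_antisymm (rank_le_aux A₁ B₁ A₂ B₂ h) ?_
    have hunit : IsUnit (W h) := (Matrix.isUnit_iff_isUnit_det _).mpr (isUnit_iff_ne_zero.mpr hdet)
    have hr : (W h).rank = M₀.rank := by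
      rw [Matrix.rank_of_isUnit _ hunit, Fintype.card_fin]
    calc M₀.rank = (W h).rank := hr.symm
      _ ≤ (U * fromCols C₂ (exp (h • A₂) * C₁)).rank := Matrix.rank_mul_le_left _ _
      _ ≤ (fromCols C₂ (exp (h • A₂) * C₁)).rank := Matrix.rank_mul_le_right _ _
  have hZ := measure_zero_of_analytic hg hdet0
  rw [MeasureTheory.ae_iff]
  refine MeasureTheory.measure_mono_null ?_ hZ
  intro x hx
  show (W x).det = 0
  by_contra hne
  exact hx (key x hne)
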